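/- Let k ≥ 1 and j be natural numbers with j ≤ 2k. Over ℂ (or over ℝ), let C be the 2k×2k cyclic shift matrix (C a b = 1 if a = b + 1 modulo 2k, and 0 otherwise). Set H00 = C^j + C^k + C^(2k−j), let H01 be the 2k×4k matrix formed by placing I_{2k} and C side by side, let H10 = H01ᵀ, and let H11 be the 4k×4k block matrix [[C^j + C^(2k−j), C^(k+1)], [C^(k−1), C^j + C^(2k−j)]]. Then the compatibility conditions hold: H00·H01 = H01·H11 and H11·H10 = H10·H00. -/

import Mathlib

open Matrix
open Fin.NatCast

lemma cyc_pow_aux (k : ℕ) (hk : 1 ≤ k)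
    (Cyc : Matrix (Fin (2 * k)) (Fin (2 * k)) ℂ)
    (hCyc : ∀ a b : Fin (2 * k),
      Cyc a b = if (a : ℕ) = ((b : ℕ) + 1) % (2 * k) then 1 else 0)
    (n : ℕ) :
    haveI : NeZero (2 * k) := ⟨by omega⟩
    Cyc ^ n = Matrix.of (fun a b => if a = b + (n : Fin (2 * k)) then 1 else 0) := by
  haveI : NeZero (2 * k) := ⟨by omega⟩
  have hval1 : ((1 : Fin (2 * k)) : ℕ) = 1 := by
    have : ((1 : Fin (2 * k)) : ℕ) = 1 % (2 * k) := rfl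
    rw [this, Nat.mod_eq_of_lt (by omega)]
  have h1 : ∀ b : Fin (2 * k), ((b : ℕ) + 1) % (2 * k) = ((b + 1 : Fin (2 * k)) : ℕ) := by
    intro b
    rw [Fin.val_add, hval1]
  induction n with
  | zero =>
    ext a b
    simp [Matrix.one_apply, eq_comm]
  | succ n ih =>
    ext a b
    rw [pow_succ, ih, Matrix.mul_apply]
    rw [Finset.sum_eq_single (b + 1)]
    · rw [hCyc]
      simp only [Matrix.of_apply, h1 b, Fin.val_inj]
      have h2 : b + ((n : ℕ) + 1 : ℕ) = b + 1 + (n : Fin (2 * k)) := by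
        push_cast
        abel
      by_cases h : a = b + ((n : ℕ) + 1 : ℕ) <;> simp [h, h2, ← h2]
    · intro c _ hc
      rw [hCyc]
      have : ¬ ((c : ℕ) = ((b : ℕ) + 1) % (2 * k)) := by
        intro h
        exact hc (Fin.val_inj.mp (h.trans (h1 b)).symm ▸ rfl)
      simp [this]
    · simp

theorem stmt14 (k j : ℕ) (hk : 1 ≤ k) (hj : j ≤ 2 * k)
    (Cyc : Matrix (Fin (2 * k)) (Fin (2 * k)) ℂ)
    (hCyc : ∀ a b : Fin (2 * k),
      Cyc a b = if (a : ℕ) = ((b : ℕ) + 1) % (2 * k) then 1 else 0)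
    (H00 : Matrix (Fin (2 * k)) (Fin (2 * k)) ℂ)
    (hH00 : H00 = Cyc ^ j + Cyc ^ k + Cyc ^ (2 * k - j))
    (H01 : Matrix (Fin (2 * k)) (Fin (2 * k) ⊕ Fin (2 * k)) ℂ)
    (hH01 : H01 = Matrix.fromCols 1 Cyc)
    (H10 : Matrix (Fin (2 * k) ⊕ Fin (2 * k)) (Fin (2 * k)) ℂ)
    (hH10 : H10 = H01ᵀ)
    (H11 : Matrix (Fin (2 * k) ⊕ Fin (2 * k)) (Fin (2 * k) ⊕ Fin (2 * k)) ℂ)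
    (hH11 : H11 = Matrix.fromBlocks (Cyc ^ j + Cyc ^ (2 * k - j)) (Cyc ^ (k + 1))
      (Cyc ^ (k - 1)) (Cyc ^ j + Cyc ^ (2 * k - j))) :
    H00 * H01 = H01 * H11 ∧ H11 * H10 = H10 * H00 := by
  haveI : NeZero (2 * k) := ⟨by omega⟩
  have hval1 : ((1 : Fin (2 * k)) : ℕ) = 1 := by
    have : ((1 : Fin (2 * k)) : ℕ) = 1 % (2 * k) := rfl
    rw [this, Nat.mod_eq_of_lt (by omega)]
  have h2k : Cyc ^ (2 * k) = 1 := by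
    rw [cyc_pow_aux k hk Cyc hCyc]
    ext a b
    have : ((2 * k : ℕ) : Fin (2 * k)) = 0 := by
      simp [Fin.natCast_self]
    simp [this, Matrix.one_apply, eq_comm]
  have hred : ∀ m n : ℕ, m = n + 2 * k → Cyc ^ m = Cyc ^ n := by
    intro m n h
    rw [h, pow_add, h2k, mul_one]
  have hT : Cycᵀ = Cyc ^ (2 * k - 1) := by
    rw [cyc_pow_aux k hk Cyc hCyc]
    ext a b
    rw [Matrix.transpose_apply, hCyc]
    have h2 : ∀ x : Fin (2 * k), x + ((2 * k - 1 : ℕ) : Fin (2 * k)) + 1 = x := by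
      intro x
      have h0 : ((2 * k - 1 : ℕ) : Fin (2 * k)) + 1 = 0 := by
        rw [show (1 : Fin (2 * k)) = ((1 : ℕ) : Fin (2 * k)) by rw [Nat.cast_one],
          ← Nat.cast_add, show 2 * k - 1 + 1 = 2 * k by omega, Fin.natCast_self]
      rw [add_assoc, h0, add_zero]
    have h1 : ((a : ℕ) + 1) % (2 * k) = ((a + 1 : Fin (2 * k)) : ℕ) := by
      rw [Fin.val_add, hval1]
    rw [h1]
    simp only [Matrix.of_apply, Fin.val_inj]
    have key : (b = a + 1) ↔ (a = b + ((2 * k - 1 : ℕ) : Fin (2 * k))) := by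
      constructor
      · intro h
        rw [h, add_right_comm, h2 a]
      · intro h
        rw [h, h2 b]
    rw [if_congr key rfl rfl]
  subst hH00 hH01 hH10 hH11
  constructor
  · rw [Matrix.mul_fromCols, Matrix.fromCols_mul_fromBlocks,
      Matrix.fromCols_ext_iff]
    constructor
    · rw [mul_one, one_mul]
      have : Cyc * Cyc ^ (k - 1) = Cyc ^ k := by
        rw [← pow_succ']
        congr 1
        omega
      rw [this]
      abel
    · rw [one_mul]
      have e1 : (Cyc ^ j + Cyc ^ k + Cyc ^ (2 * k - j)) * Cyc
          = Cyc ^ (j + 1) + Cyc ^ (k + 1) + Cyc ^ (2 * k - j + 1) := by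
        rw [add_mul, add_mul, ← pow_succ, ← pow_succ, ← pow_succ]
      have e2 : Cyc * (Cyc ^ j + Cyc ^ (2 * k - j))
          = Cyc ^ (j + 1) + Cyc ^ (2 * k - j + 1) := by
        rw [mul_add, ← pow_succ', ← pow_succ']
      rw [e1, e2]
      abel
  · rw [Matrix.transpose_fromCols, Matrix.transpose_one, hT,
      Matrix.fromBlocks_mul_fromRows, Matrix.fromRows_mul, Matrix.fromRows_ext_iff]
    constructor
    · rw [mul_one, one_mul, ← pow_add]
      have : Cyc ^ (k + 1 + (2 * k - 1)) = Cyc ^ k := hred _ _ (by omega)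
      rw [this]
      abel
    · rw [mul_one, add_mul, ← pow_add, ← pow_add, mul_add, mul_add, ← pow_add, ← pow_add,
        ← pow_add]
      have e1 : Cyc ^ (j + (2 * k - 1)) = Cyc ^ (2 * k - 1 + j) := by
        congr 1
        omega
      have e2 : Cyc ^ (2 * k - j + (2 * k - 1)) = Cyc ^ (2 * k - 1 + (2 * k - j)) := by
        congr 1
        omega
      have e3 : Cyc ^ (2 * k - 1 + k) = Cyc ^ (k - 1) := hred _ _ (by omega)
      rw [e1, e2, e3]
      abel
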